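/- The averaging operator A, defined by (AF)(xy,t) = (1/m⁰(x))·Σ_{u:u∼x} c(xu)·∫₀^{1−t} F(xu,s) ds + (1/m⁰(y))·Σ_{v:v∼y} c(yv)·∫₀^{t} F(yv,s) ds, is a bounded self-adjoint operator on the Hilbert space L²(X¹,m¹). -/

import Mathlib

open MeasureTheory Set ENNReal

set_option linter.unusedSectionVars false

noncomputable section

/-- A weighted network: countable connected graph without loops or multiple edges,
equipped with positive conductances `c` satisfying `m⁰(x) = ∑_{y∼x} c(xy) < ∞`. -/
structure Network (V : Type) : Type where
  adj : V → V → Prop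
  adj_symm : ∀ x y, adj x y → adj y x
  adj_irrefl : ∀ x, ¬ adj x x
  adj_connected : ∀ x y, Relation.ReflTransGen adj x y
  c : V → V → ℝ
  c_symm : ∀ x y, c x y = c y x
  c_pos : ∀ x y, adj x y → 0 < c x y
  c_eq_zero : ∀ x y, ¬ adj x y → c x y = 0
  c_summable : ∀ x, Summable fun y => c x y

namespace Network

variable {V : Type} [Countable V] [MeasurableSpace V] [DiscreteMeasurableSpace V]

/-- The vertex weight `m⁰(x) = ∑_{y : y ∼ x} c(xy)`. -/
def m0 (N : Network V) (x : V) : ℝ := ∑' y, N.c x y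

/-- The measure `m¹` on the metric graph `X¹`.  A point `((x,y),t)` represents the point
at distance `t ∈ (0,1)` from `x` on the edge `[x,y]`; each edge appears with both
orientations, whence the factor `1/2`. -/
def edgeMeasure (N : Network V) : Measure ((V × V) × ℝ) :=
  Measure.sum fun e : V × V =>
    Measure.map (fun t => (e, t))
      ((ENNReal.ofReal (N.c e.1 e.2 / 2)) • (volume.restrict (Set.Ioo (0:ℝ) 1)))

/-- The identification `(xy,t) ≡ (yx,1-t)` of the two orientations of an edge. -/
def eFlip : (V × V) × ℝ → (V × V) × ℝ := fun p => ((p.1.2, p.1.1), 1 - p.2)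

theorem measurable_eFlip : Measurable (eFlip (V := V)) := by
  apply Measurable.prod
  · exact ((measurable_snd.comp measurable_fst).prodMk (measurable_fst.comp measurable_fst))
  · exact measurable_const.sub measurable_snd

theorem measurePreserving_eFlip (N : Network V) :
    MeasurePreserving (eFlip (V := V)) N.edgeMeasure N.edgeMeasure := by
  refine ⟨measurable_eFlip, ?_⟩
  ext s hs
  rw [Measure.map_apply measurable_eFlip hs, edgeMeasure,
    Measure.sum_apply _ (measurable_eFlip hs), Measure.sum_apply _ hs]
  have key : ∀ e : V × V,
      (Measure.map (fun t => (e, t))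
        ((ENNReal.ofReal (N.c e.1 e.2 / 2)) • (volume.restrict (Set.Ioo (0:ℝ) 1))))
          (eFlip ⁻¹' s)
      = (Measure.map (fun t => ((e.2, e.1), t))
        ((ENNReal.ofReal (N.c e.2 e.1 / 2)) • (volume.restrict (Set.Ioo (0:ℝ) 1)))) s := by
    intro e
    have hme : Measurable fun t : ℝ => (e, t) := measurable_prodMk_left
    have hme' : Measurable fun t : ℝ => ((e.2, e.1), t) := measurable_prodMk_left
    rw [Measure.map_apply hme (measurable_eFlip hs), Measure.map_apply hme' hs,
      Measure.smul_apply, Measure.smul_apply, N.c_symm e.1 e.2]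
    congr 1
    have hpre : ((fun t : ℝ => (e, t)) ⁻¹' (eFlip ⁻¹' s))
        = (fun t : ℝ => 1 - t) ⁻¹' ((fun t : ℝ => ((e.2, e.1), t)) ⁻¹' s) := by
      ext t; simp [eFlip]
    rw [hpre]
    have hmp : MeasurePreserving (fun t : ℝ => 1 - t)
        (volume.restrict (Set.Ioo (0:ℝ) 1)) (volume.restrict (Set.Ioo (0:ℝ) 1)) := by
      have h0 : MeasurePreserving (fun t : ℝ => 1 - t) volume volume :=
        Measure.measurePreserving_sub_left volume 1
      have h1 := h0.restrict_preimage (s := Set.Ioo (0:ℝ) 1) measurableSet_Ioo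
      have h2 : (fun t : ℝ => 1 - t) ⁻¹' (Set.Ioo (0:ℝ) 1) = Set.Ioo (0:ℝ) 1 := by
        ext t; constructor <;> (intro ht; simp only [Set.mem_preimage, Set.mem_Ioo] at *; constructor <;> linarith [ht.1, ht.2])
      rwa [h2] at h1
    exact (hmp.measure_preimage ((hme' hs).nullMeasurableSet)).symm ▸ rfl
  calc
    (∑' e : V × V,
        (Measure.map (fun t => (e, t))
          ((ENNReal.ofReal (N.c e.1 e.2 / 2)) • (volume.restrict (Set.Ioo (0:ℝ) 1))))
            (eFlip ⁻¹' s))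
        = ∑' e : V × V,
          (Measure.map (fun t => ((e.2, e.1), t))
            ((ENNReal.ofReal (N.c e.2 e.1 / 2)) • (volume.restrict (Set.Ioo (0:ℝ) 1)))) s :=
      tsum_congr key
    _ = ∑' e : V × V,
          (Measure.map (fun t => (e, t))
            ((ENNReal.ofReal (N.c e.1 e.2 / 2)) • (volume.restrict (Set.Ioo (0:ℝ) 1)))) s :=
      (Equiv.prodComm V V).tsum_eq fun e =>
        (Measure.map (fun t => (e, t))
          ((ENNReal.ofReal (N.c e.1 e.2 / 2)) • (volume.restrict (Set.Ioo (0:ℝ) 1)))) s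

/-- The continuous linear map `F ↦ F ∘ σ` induced by the edge-orientation flip. -/
def flipOp (N : Network V) : Lp ℂ 2 N.edgeMeasure →L[ℂ] Lp ℂ 2 N.edgeMeasure :=
  (Lp.compMeasurePreservingₗᵢ (E := ℂ) (p := 2) ℂ (eFlip (V := V))
    N.measurePreserving_eFlip).toContinuousLinearMap

/-- The Hilbert space `L²(X¹, m¹)` of square-integrable functions on the metric graph,
realized as the subspace of `L²` functions on oriented edges which are compatible with
the identification `(xy,t) ≡ (yx, 1-t)`. -/
def L2X (N : Network V) : Submodule ℂ (Lp ℂ 2 N.edgeMeasure) :=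
  LinearMap.ker ((N.flipOp - ContinuousLinearMap.id ℂ (Lp ℂ 2 N.edgeMeasure)) :
    Lp ℂ 2 N.edgeMeasure →ₗ[ℂ] Lp ℂ 2 N.edgeMeasure)

theorem isClosed_L2X (N : Network V) : IsClosed (N.L2X : Set (Lp ℂ 2 N.edgeMeasure)) :=
  ContinuousLinearMap.isClosed_ker (N.flipOp - ContinuousLinearMap.id ℂ (Lp ℂ 2 N.edgeMeasure))

instance (N : Network V) : CompleteSpace N.L2X :=
  (isClosed_L2X N).completeSpace_coe

end Network

namespace Network

variable {V : Type} [Countable V] [MeasurableSpace V] [DiscreteMeasurableSpace V]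

/-- The value of (a representative of) `F ∈ L²(X¹,m¹)` at the point of the edge `[x,y]`
at distance `t` from `x`. -/
def edgeFun (N : Network V) (F : Lp ℂ 2 N.edgeMeasure) (x y : V) (t : ℝ) : ℂ :=
  F ((x, y), t)

/-- The counting measure on vertices weighted by `m⁰`; `ℓ²(X⁰,m⁰) = Lp ℂ 2 N.vertexMeasure`. -/
def vertexMeasure (N : Network V) : Measure V :=
  Measure.sum fun x => (ENNReal.ofReal (N.m0 x)) • Measure.dirac x

/-- The averaging operator, at the level of functions. -/
def avgFun (N : Network V) (f : V → V → ℝ → ℂ) (x y : V) (t : ℝ) : ℂ :=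
  (N.m0 x : ℂ)⁻¹ * (∑' u, (N.c x u : ℂ) * (∫ s in (0:ℝ)..(1 - t), f x u s))
    + (N.m0 y : ℂ)⁻¹ * (∑' v, (N.c y v : ℂ) * (∫ s in (0:ℝ)..t, f y v s))

/-- `f, g, h` are (continuous versions of) an element of `Ĥ²(X¹,m¹)` together with its first
and second edgewise derivatives: on each edge, `g` is the derivative of `f` and `h` the
derivative of `g` (in the sense of absolutely continuous functions, via the fundamental
theorem of calculus), and `f`, `g`, `h` are square-integrable on the metric graph. -/
structure IsH2Rep (N : Network V) (f g h : V → V → ℝ → ℂ) : Prop where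
  ftc₁ : ∀ x y, N.adj x y → ∀ t ∈ Set.Icc (0:ℝ) 1,
    f x y t = f x y 0 + ∫ s in (0:ℝ)..t, g x y s
  ftc₂ : ∀ x y, N.adj x y → ∀ t ∈ Set.Icc (0:ℝ) 1,
    g x y t = g x y 0 + ∫ s in (0:ℝ)..t, h x y s
  intervalIntegrable_g : ∀ x y, N.adj x y → IntervalIntegrable (g x y) volume 0 1
  intervalIntegrable_h : ∀ x y, N.adj x y → IntervalIntegrable (h x y) volume 0 1
  memL2_f : MemLp (fun p : (V × V) × ℝ => f p.1.1 p.1.2 p.2) 2 N.edgeMeasure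
  memL2_g : MemLp (fun p : (V × V) × ℝ => g p.1.1 p.1.2 p.2) 2 N.edgeMeasure
  memL2_h : MemLp (fun p : (V × V) × ℝ => h p.1.1 p.1.2 p.2) 2 N.edgeMeasure

/-- The graph of the operator `S = -d²/dt²` with domain the functions in `Ĥ²(X¹,m¹)` which are
continuous at the vertices: `(F, G) ∈ graph S` iff `F` has an edgewise `H²` representative
`f` (with derivatives `g`, `h`), `f` is continuous at each vertex, and `G = -f''`. -/
def SGraph (N : Network V) (F G : N.L2X) : Prop :=
  ∃ f g h : V → V → ℝ → ℂ, N.IsH2Rep f g h ∧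
    (⇑(F : Lp ℂ 2 N.edgeMeasure) =ᵐ[N.edgeMeasure] fun p => f p.1.1 p.1.2 p.2) ∧
    (∀ x u v, N.adj x u → N.adj x v → f x u 0 = f x v 0) ∧
    (⇑(G : Lp ℂ 2 N.edgeMeasure) =ᵐ[N.edgeMeasure] fun p => -(h p.1.1 p.1.2 p.2))

/-- The graph of the (Kirchhoff) Laplacian `L`: the restriction of `S` to the functions
satisfying moreover `F'(x) = ∑_{y∼x} c(xy) F'(xy,0+) = 0` at every vertex `x`. -/
def LGraph (N : Network V) (F G : N.L2X) : Prop :=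
  ∃ f g h : V → V → ℝ → ℂ, N.IsH2Rep f g h ∧
    (⇑(F : Lp ℂ 2 N.edgeMeasure) =ᵐ[N.edgeMeasure] fun p => f p.1.1 p.1.2 p.2) ∧
    (∀ x u v, N.adj x u → N.adj x v → f x u 0 = f x v 0) ∧
    (∀ x, Summable fun y => (N.c x y : ℂ) * g x y 0) ∧
    (∀ x, ∑' y, (N.c x y : ℂ) * g x y 0 = 0) ∧
    (⇑(G : Lp ℂ 2 N.edgeMeasure) =ᵐ[N.edgeMeasure] fun p => -(h p.1.1 p.1.2 p.2))

end Network

/-- The graph of the adjoint of a densely defined operator, described by its graph `T`: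
`(G,K) ∈ graph T*` iff `⟪G, SF⟫ = ⟪K, F⟫` for all `(F, SF) ∈ T`. -/
def adjointGraph {H : Type*} [NormedAddCommGroup H] [InnerProductSpace ℂ H]
    (T : Set (H × H)) : Set (H × H) :=
  {q | ∀ p ∈ T, (inner ℂ q.1 p.2 : ℂ) = inner ℂ q.2 p.1}

/-- A densely defined operator given by its graph `T` is self-adjoint if `T* = T`. -/
def IsSelfAdjointGraph {H : Type*} [NormedAddCommGroup H] [InnerProductSpace ℂ H]
    (T : Set (H × H)) : Prop :=
  Dense (Prod.fst '' T) ∧ adjointGraph T = T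

/-- The entire function `Φ(z,t) = t` for `z = 0` and `sin(zt)/z` otherwise. -/
def Phi (z : ℂ) (t : ℝ) : ℂ := if z = 0 then (t : ℂ) else Complex.sin (z * t) / z

namespace Network

variable {V : Type} [Countable V] [MeasurableSpace V] [DiscreteMeasurableSpace V]

/-- Iterated forward extension step for the d'Alembert extension: `fwdExt f n x y s`
represents `F̃(xy, s + n)` for `s ∈ (0,1]`. -/
def fwdExt (N : Network V) (f : V → V → ℝ → ℂ) : ℕ → V → V → ℝ → ℂ
  | 0 => f
  | (n+1) => fun x y s =>
      (2 / (N.m0 y) : ℂ) * ∑' v, (N.c y v : ℂ) * N.fwdExt f n y v s - N.fwdExt f n y x s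

/-- Iterated backward extension step for the d'Alembert extension: `bwdExt f n x y s`
represents `F̃(xy, s - n)` for `s ∈ [0,1)`. -/
def bwdExt (N : Network V) (f : V → V → ℝ → ℂ) : ℕ → V → V → ℝ → ℂ
  | 0 => f
  | (n+1) => fun x y s =>
      (2 / (N.m0 x) : ℂ) * ∑' u, (N.c x u : ℂ) * N.bwdExt f n u x s - N.bwdExt f n y x s

/-- The d'Alembert extension `F̃` of a function `F` on the metric graph: each edge component
`t ↦ F(xy,t)`, `t ∈ [0,1]`, is extended to the whole real line by the recursion
`F̃(xy,t) = (2/m⁰(y)) ∑_{v∼y} c(yv) F̃(yv,t-1) - F̃(yx,t-1)` for `t > 1` and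
`F̃(xy,t) = (2/m⁰(x)) ∑_{u∼x} c(ux) F̃(ux,t+1) - F̃(yx,t+1)` for `t < 0`. -/
def tilde (N : Network V) (f : V → V → ℝ → ℂ) (x y : V) (t : ℝ) : ℂ :=
  if 0 ≤ t ∧ t ≤ 1 then f x y t
  else if 1 < t then N.fwdExt f (⌈t⌉ - 1).toNat x y (t - ((⌈t⌉ - 1 : ℤ) : ℝ))
  else N.bwdExt f (-⌊t⌋).toNat x y (t + ((-⌊t⌋ : ℤ) : ℝ))

/-- The d'Alembert operator `C(τ)` at the level of functions. -/
def dAlembertFun (N : Network V) (f : V → V → ℝ → ℂ) (τ : ℝ) (x y : V) (t : ℝ) : ℂ :=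
  (N.tilde f x y (t + τ) + N.tilde f x y (t - τ)) / 2

/-- The squared norm `‖g‖²_{L²(X¹,m¹)} = (1/2) ∑_x ∑_{y} c(xy) ∫₀¹ |g(xy,t)|² dt`
(with values in `ℝ≥0∞`). -/
def normSq (N : Network V) (g : V → V → ℝ → ℂ) : ℝ≥0∞ :=
  (1/2 : ℝ≥0∞) * ∑' x, ∑' y, ENNReal.ofReal (N.c x y) *
    ∫⁻ t in Set.Ioo (0:ℝ) 1, ((‖g x y t‖₊ : ℝ≥0∞) ^ 2)

end Network



section MyHelpers


section Helpers

open scoped NNReal ComplexConjugate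

lemma ennreal_rpow_half_sq (x : ℝ≥0∞) : (x ^ (1/2:ℝ)) ^ (2:ℝ) = x := by
  rw [← ENNReal.rpow_mul]; norm_num

lemma ennreal_rpow_half_mul_self (x : ℝ≥0∞) : x ^ (1/2:ℝ) * x ^ (1/2:ℝ) = x := by
  rw [← ENNReal.rpow_add_of_nonneg _ _ (by norm_num) (by norm_num)]; norm_num

lemma ennreal_sq_eq_rpow (x : ℝ≥0∞) : x ^ 2 = x ^ (2:ℝ) := by
  rw [← ENNReal.rpow_natCast x 2]; norm_num

/-- AM-GM-ish bound in `ℝ≥0∞`. -/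
lemma ennreal_sqrt_mul_le_add (a b : ℝ≥0∞) : a ^ (1/2:ℝ) * b ^ (1/2:ℝ) ≤ a + b := by
  rcases le_total a b with h | h
  · calc a ^ (1/2:ℝ) * b ^ (1/2:ℝ) ≤ b ^ (1/2:ℝ) * b ^ (1/2:ℝ) :=
          mul_le_mul' (ENNReal.rpow_le_rpow h (by norm_num)) le_rfl
    _ = b := ennreal_rpow_half_mul_self b
    _ ≤ a + b := le_add_self
  · calc a ^ (1/2:ℝ) * b ^ (1/2:ℝ) ≤ a ^ (1/2:ℝ) * a ^ (1/2:ℝ) :=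
          mul_le_mul' le_rfl (ENNReal.rpow_le_rpow h (by norm_num))
    _ = a := ennreal_rpow_half_mul_self a
    _ ≤ a + b := le_self_add

lemma ennreal_nnnorm_tsum_le {ι : Type*} (a : ι → ℂ) :
    (‖∑' i, a i‖₊ : ℝ≥0∞) ≤ ∑' i, (‖a i‖₊ : ℝ≥0∞) := by
  by_cases h : ∑' i, (‖a i‖₊ : ℝ≥0∞) = ⊤
  · simp [h]
  · have hs : Summable fun i => ‖a i‖₊ := ENNReal.tsum_coe_ne_top_iff_summable.mp h
    have hs' : Summable fun i => ‖a i‖ := by simpa [← NNReal.summable_coe] using hs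
    calc (‖∑' i, a i‖₊ : ℝ≥0∞) ≤ ((∑' i, ‖a i‖₊ : ℝ≥0) : ℝ≥0∞) := by
          apply ENNReal.coe_le_coe.mpr
          have h1 := norm_tsum_le_tsum_norm hs'
          have h2 : ((∑' i, ‖a i‖₊ : ℝ≥0) : ℝ) = ∑' i, ‖a i‖ := by
            rw [NNReal.coe_tsum]; rfl
          rw [← NNReal.coe_le_coe, coe_nnnorm, h2]
          exact h1
    _ = ∑' i, (‖a i‖₊ : ℝ≥0∞) := ENNReal.coe_tsum hs

/-- Cauchy-Schwarz for weighted sums in `ℝ≥0∞`. -/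
lemma ennreal_cs_tsum {ι : Type*} [Countable ι] [MeasurableSpace ι]
    [MeasurableSingletonClass ι] (w a : ι → ℝ≥0∞) :
    (∑' u, w u * a u) ^ 2 ≤ (∑' u, w u) * ∑' u, w u * a u ^ 2 := by
  have hconj : Real.HolderConjugate 2 2 := Real.HolderConjugate.two_two
  have hh := ENNReal.lintegral_mul_le_Lp_mul_Lq Measure.count hconj
    (f := fun u => w u ^ (1/2:ℝ)) (g := fun u => w u ^ (1/2:ℝ) * a u)
    (measurable_of_countable _).aemeasurable (measurable_of_countable _).aemeasurable
  simp only [lintegral_count, Pi.mul_apply] at hh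
  have key : ∀ u, w u ^ (1/2:ℝ) * (w u ^ (1/2:ℝ) * a u) = w u * a u := by
    intro u; rw [← mul_assoc, ennreal_rpow_half_mul_self]
  have key3 : ∀ u, (w u ^ (1/2:ℝ) * a u) ^ (2:ℝ) = w u * a u ^ 2 := by
    intro u
    rw [ENNReal.mul_rpow_of_nonneg _ _ (by norm_num), ennreal_rpow_half_sq,
      ennreal_sq_eq_rpow]
  simp only [key, ennreal_rpow_half_sq, key3] at hh
  calc (∑' u, w u * a u) ^ 2
      ≤ ((∑' u, w u) ^ (1/2:ℝ) * (∑' u, w u * a u ^ 2) ^ (1/2:ℝ)) ^ 2 :=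
        pow_le_pow_left₀ zero_le hh 2
  _ = (∑' u, w u) * ∑' u, w u * a u ^ 2 := by
        rw [mul_pow, ennreal_sq_eq_rpow, ennreal_sq_eq_rpow, ennreal_rpow_half_sq,
          ennreal_rpow_half_sq]

/-- Cauchy-Schwarz for lintegrals over `Ioo 0 1`. -/
lemma ennreal_cs_lintegral (h : ℝ → ℝ≥0∞) (hm : AEMeasurable h (volume.restrict (Ioo (0:ℝ) 1))) :
    (∫⁻ s in Ioo (0:ℝ) 1, h s) ^ 2 ≤ ∫⁻ s in Ioo (0:ℝ) 1, h s ^ 2 := by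
  have hconj : Real.HolderConjugate 2 2 := Real.HolderConjugate.two_two
  have hh := ENNReal.lintegral_mul_le_Lp_mul_Lq (volume.restrict (Ioo (0:ℝ) 1)) hconj
    (f := h) (g := fun _ => 1) hm aemeasurable_const
  simp only [Pi.mul_apply, mul_one, ENNReal.one_rpow, lintegral_const,
    Measure.restrict_apply, univ_inter, MeasurableSet.univ] at hh
  rw [Real.volume_Ioo] at hh
  norm_num at hh
  calc (∫⁻ s in Ioo (0:ℝ) 1, h s) ^ 2
      ≤ ((∫⁻ s in Ioo (0:ℝ) 1, h s ^ (2:ℕ)) ^ (1/(2:ℝ))) ^ 2 :=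
        pow_le_pow_left₀ zero_le hh 2
  _ = ∫⁻ s in Ioo (0:ℝ) 1, h s ^ 2 := by
        rw [ennreal_sq_eq_rpow ((∫⁻ s in Ioo (0:ℝ) 1, h s ^ (2:ℕ)) ^ (1/(2:ℝ))), ennreal_rpow_half_sq]

end Helpers

section AvgOperator

open scoped NNReal ComplexConjugate Classical

namespace Network

variable {V : Type} [Countable V] [MeasurableSpace V] [DiscreteMeasurableSpace V] (N : Network V)

lemma c_nonneg (x y : V) : 0 ≤ N.c x y := by
  by_cases h : N.adj x y
  · exact (N.c_pos x y h).le
  · simp [N.c_eq_zero x y h]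

lemma m0_nonneg (x : V) : 0 ≤ N.m0 x := tsum_nonneg fun y => N.c_nonneg x y

lemma ofReal_m0 (x : V) : ENNReal.ofReal (N.m0 x) = ∑' u, ENNReal.ofReal (N.c x u) :=
  ENNReal.ofReal_tsum_of_nonneg (fun u => N.c_nonneg x u) (N.c_summable x)

lemma lintegral_edgeMeasure (φ : (V × V) × ℝ → ℝ≥0∞) (hφ : AEMeasurable φ N.edgeMeasure) :
    ∫⁻ p, φ p ∂N.edgeMeasure
      = ∑' e : V × V, ENNReal.ofReal (N.c e.1 e.2 / 2) * ∫⁻ t in Ioo (0:ℝ) 1, φ (e, t) := by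
  rw [edgeMeasure] at hφ ⊢
  rw [lintegral_sum_measure]
  refine tsum_congr fun e => ?_
  rw [lintegral_map' (hφ.mono_measure (Measure.le_sum _ e)) measurable_prodMk_left.aemeasurable,
    lintegral_smul_measure, smul_eq_mul]

lemma ae_snd_mem_Ioo : ∀ᵐ p ∂N.edgeMeasure, p.2 ∈ Ioo (0:ℝ) 1 := by
  rw [ae_iff]
  have hms : MeasurableSet {p : (V × V) × ℝ | ¬ p.2 ∈ Ioo (0:ℝ) 1} :=
    (measurable_snd measurableSet_Ioo).compl
  rw [edgeMeasure, Measure.sum_apply _ hms]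
  refine ENNReal.tsum_eq_zero.mpr fun e => ?_
  rw [Measure.map_apply measurable_prodMk_left hms, Measure.smul_apply]
  have hpre : (Prod.mk e) ⁻¹' {p : (V × V) × ℝ | ¬ p.2 ∈ Ioo (0:ℝ) 1}
      = (Ioo (0:ℝ) 1)ᶜ := rfl
  rw [hpre, Measure.restrict_apply (measurableSet_Ioo.compl), Set.compl_inter_self]
  simp

/-- The star-sum of `∫⁻ ‖f‖` over the edges at `x`. -/
def eS (f : (V × V) × ℝ → ℂ) (x : V) : ℝ≥0∞ :=
  ∑' u, ENNReal.ofReal (N.c x u) * ∫⁻ s in Ioo (0:ℝ) 1, (‖f ((x, u), s)‖₊ : ℝ≥0∞)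

/-- The star-sum of `∫⁻ ‖f‖²` over the edges at `x`. -/
def eW (f : (V × V) × ℝ → ℂ) (x : V) : ℝ≥0∞ :=
  ∑' u, ENNReal.ofReal (N.c x u) * ∫⁻ s in Ioo (0:ℝ) 1, (‖f ((x, u), s)‖₊ : ℝ≥0∞) ^ 2

lemma two_mul_ofReal_half (r : ℝ) : 2 * ENNReal.ofReal (r / 2) = ENNReal.ofReal r := by
  rw [show (2:ℝ≥0∞) = ENNReal.ofReal 2 by simp, ← ENNReal.ofReal_mul (by norm_num)]
  congr 1; ring

lemma tsum_eW (f : (V × V) × ℝ → ℂ) (hf : AEStronglyMeasurable f N.edgeMeasure) :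
    ∑' x, N.eW f x = 2 * ∫⁻ p, (‖f p‖₊ : ℝ≥0∞) ^ 2 ∂N.edgeMeasure := by
  rw [N.lintegral_edgeMeasure (fun p => (‖f p‖₊ : ℝ≥0∞) ^ 2) ((hf.enorm).pow_const 2),
    ENNReal.tsum_prod (f := fun x u => ENNReal.ofReal (N.c x u / 2) *
      ∫⁻ t in Ioo (0:ℝ) 1, (‖f ((x, u), t)‖₊ : ℝ≥0∞) ^ 2),
    ← ENNReal.tsum_mul_left]
  refine tsum_congr fun x => ?_
  rw [← ENNReal.tsum_mul_left, eW]
  refine tsum_congr fun u => ?_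
  rw [← mul_assoc, two_mul_ofReal_half]

lemma eS_sq_le (f : (V × V) × ℝ → ℂ) (hf : StronglyMeasurable f) (x : V) :
    N.eS f x ^ 2 ≤ ENNReal.ofReal (N.m0 x) * N.eW f x := by
  refine (ennreal_cs_tsum _ _).trans ?_
  rw [← N.ofReal_m0]
  refine mul_le_mul' le_rfl (ENNReal.tsum_le_tsum fun u => mul_le_mul' le_rfl ?_)
  refine ennreal_cs_lintegral _ ?_
  exact ((hf.measurable.comp measurable_prodMk_left).nnnorm.coe_nnreal_ennreal).aemeasurable

/-- The basic one-sided averaging operation at the level of functions. -/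
def bFun (f : (V × V) × ℝ → ℂ) : (V × V) × ℝ → ℂ :=
  fun p => (N.m0 p.1.1 : ℂ)⁻¹ * ∑' u, (N.c p.1.1 u : ℂ) * ∫ s in (0:ℝ)..(1 - p.2), f ((p.1.1, u), s)

lemma ofReal_c_eq (x u : V) : (‖((N.c x u : ℝ) : ℂ)‖₊ : ℝ≥0∞) = ENNReal.ofReal (N.c x u) := by
  rw [← enorm_eq_nnnorm, ← ofReal_norm, Complex.norm_real, Real.norm_eq_abs,
    abs_of_nonneg (N.c_nonneg x u)]

lemma ofReal_m0_eq (x : V) : (‖((N.m0 x : ℝ) : ℂ)‖₊ : ℝ≥0∞) = ENNReal.ofReal (N.m0 x) := by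
  rw [← enorm_eq_nnnorm, ← ofReal_norm, Complex.norm_real, Real.norm_eq_abs,
    abs_of_nonneg (N.m0_nonneg x)]

lemma inv_m0_mul_le_one (x : V) :
    (‖((N.m0 x : ℝ) : ℂ)⁻¹‖₊ : ℝ≥0∞) * ENNReal.ofReal (N.m0 x) ≤ 1 := by
  by_cases h : N.m0 x = 0
  · simp [h]
  · have hm0 : (0:ℝ) < N.m0 x := lt_of_le_of_ne (N.m0_nonneg x) (Ne.symm h)
    have h2 : (‖((N.m0 x : ℝ) : ℂ)‖₊) ≠ 0 := by
      simp [Complex.ofReal_eq_zero, h]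
    rw [nnnorm_inv, ENNReal.coe_inv h2, N.ofReal_m0_eq x]
    exact le_of_eq (ENNReal.inv_mul_cancel
      (by simpa [ENNReal.ofReal_eq_zero, not_le] using hm0) ENNReal.ofReal_ne_top)

lemma nnnorm_intervalIntegral_le (f : (V × V) × ℝ → ℂ) (x u : V) {t : ℝ} (ht : t ∈ Icc (0:ℝ) 1) :
    (‖∫ s in (0:ℝ)..(1 - t), f ((x, u), s)‖₊ : ℝ≥0∞)
      ≤ ∫⁻ s in Ioo (0:ℝ) 1, (‖f ((x, u), s)‖₊ : ℝ≥0∞) := by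
  have h1 : (0:ℝ) ≤ 1 - t := by linarith [ht.2]
  rw [intervalIntegral.integral_of_le h1]
  refine (enorm_integral_le_lintegral_enorm _).trans ?_
  rw [show (volume.restrict (Ioc (0:ℝ) (1 - t))) = volume.restrict (Ioo (0:ℝ) (1 - t)) from
    (Measure.restrict_congr_set Ioo_ae_eq_Ioc).symm]
  exact lintegral_mono_set (Ioo_subset_Ioo le_rfl (by linarith [ht.1]))

lemma bFun_nnnorm_le (f : (V × V) × ℝ → ℂ) (x y : V) {t : ℝ} (ht : t ∈ Icc (0:ℝ) 1) :
    (‖N.bFun f ((x, y), t)‖₊ : ℝ≥0∞) ≤ (‖((N.m0 x : ℝ) : ℂ)⁻¹‖₊ : ℝ≥0∞) * N.eS f x := by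
  rw [show N.bFun f ((x,y),t)
      = (N.m0 x : ℂ)⁻¹ * ∑' u, (N.c x u : ℂ) * ∫ s in (0:ℝ)..(1 - t), f ((x, u), s) from rfl,
    nnnorm_mul, ENNReal.coe_mul]
  refine mul_le_mul' le_rfl ?_
  refine (ennreal_nnnorm_tsum_le _).trans (ENNReal.tsum_le_tsum fun u => ?_)
  rw [nnnorm_mul, ENNReal.coe_mul, ofReal_c_eq]
  exact mul_le_mul' le_rfl (nnnorm_intervalIntegral_le f x u ht)

lemma eLpNorm_two_eq {α : Type*} [MeasurableSpace α] (μ' : Measure α) (f : α → ℂ) :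
    eLpNorm f 2 μ' = (∫⁻ a, (‖f a‖₊ : ℝ≥0∞) ^ 2 ∂μ') ^ (1/2:ℝ) := by
  rw [eLpNorm_eq_lintegral_rpow_enorm_toReal (by norm_num) (by norm_num)]
  simp only [ENNReal.toReal_ofNat]
  congr 1
  refine lintegral_congr fun a => (ennreal_sq_eq_rpow _).symm

lemma memL2_iff {α : Type*} [MeasurableSpace α] {μ' : Measure α} {f : α → ℂ}
    (hm : AEStronglyMeasurable f μ') :
    MemLp f 2 μ' ↔ ∫⁻ a, (‖f a‖₊ : ℝ≥0∞) ^ 2 ∂μ' < ⊤ := by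
  have : MemLp f 2 μ' ↔ eLpNorm f 2 μ' < ⊤ := ⟨fun h => h.2, fun h => ⟨hm, h⟩⟩
  rw [this, eLpNorm_two_eq, ENNReal.rpow_lt_top_iff_of_pos (by norm_num)]

lemma lintegral_coe_sq_lt_top (F : Lp ℂ 2 N.edgeMeasure) :
    ∫⁻ p, (‖⇑F p‖₊ : ℝ≥0∞) ^ 2 ∂N.edgeMeasure < ⊤ :=
  (memL2_iff (Lp.aestronglyMeasurable F)).mp (Lp.memLp F)

lemma eW_ne_top (F : Lp ℂ 2 N.edgeMeasure) (x : V) : N.eW ⇑F x ≠ ⊤ := by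
  refine ne_top_of_le_ne_top ?_ (ENNReal.le_tsum x)
  rw [N.tsum_eW ⇑F (Lp.aestronglyMeasurable F)]
  exact (ENNReal.mul_lt_top (by norm_num) (N.lintegral_coe_sq_lt_top F)).ne

lemma eS_ne_top (F : Lp ℂ 2 N.edgeMeasure) (x : V) : N.eS ⇑F x ≠ ⊤ := by
  intro h
  have h1 := N.eS_sq_le ⇑F (Lp.stronglyMeasurable F) x
  rw [h, show ((⊤:ℝ≥0∞) ^ 2) = ⊤ by rw [pow_two, ENNReal.top_mul_top], top_le_iff] at h1
  exact (ENNReal.mul_lt_top ENNReal.ofReal_lt_top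
    (lt_top_iff_ne_top.mpr (N.eW_ne_top F x))).ne h1

lemma edge_term_ne_top (F : Lp ℂ 2 N.edgeMeasure) (x u : V) :
    ENNReal.ofReal (N.c x u) * (∫⁻ s in Ioo (0:ℝ) 1, (‖⇑F ((x, u), s)‖₊ : ℝ≥0∞)) ≠ ⊤ :=
  ne_top_of_le_ne_top (N.eS_ne_top F x) (ENNReal.le_tsum u)

lemma edge_sq_ne_top (F : Lp ℂ 2 N.edgeMeasure) (x u : V) (hc : N.c x u ≠ 0) :
    ∫⁻ s in Ioo (0:ℝ) 1, (‖⇑F ((x, u), s)‖₊ : ℝ≥0∞) ^ 2 ≠ ⊤ := by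
  intro h
  have h1 : ENNReal.ofReal (N.c x u) * (∫⁻ s in Ioo (0:ℝ) 1, (‖⇑F ((x, u), s)‖₊ : ℝ≥0∞) ^ 2)
      ≤ N.eW ⇑F x := ENNReal.le_tsum u
  rw [h, ENNReal.mul_top (by
    simpa [ENNReal.ofReal_eq_zero, not_le] using lt_of_le_of_ne (N.c_nonneg x u) (Ne.symm hc))]
    at h1
  exact N.eW_ne_top F x (top_le_iff.mp h1)

lemma edge_memL2 (F : Lp ℂ 2 N.edgeMeasure) (x u : V) (hc : N.c x u ≠ 0) :
    MemLp (fun s => ⇑F ((x, u), s)) 2 (volume.restrict (Ioo (0:ℝ) 1)) :=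
  (memL2_iff ((Lp.stronglyMeasurable F).comp_measurable
    measurable_prodMk_left).aestronglyMeasurable).mpr
    (lt_top_iff_ne_top.mpr (N.edge_sq_ne_top F x u hc))

lemma edge_integrableOn (F : Lp ℂ 2 N.edgeMeasure) (x u : V) (hc : N.c x u ≠ 0) :
    IntegrableOn (fun s => ⇑F ((x, u), s)) (uIcc (0:ℝ) 1) volume := by
  rw [uIcc_of_le (zero_le_one : (0:ℝ) ≤ 1), integrableOn_Icc_iff_integrableOn_Ioo]
  exact (N.edge_memL2 F x u hc).integrable (by norm_num)

lemma continuousOn_bFun (F : Lp ℂ 2 N.edgeMeasure) (e : V × V) :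
    ContinuousOn (fun t => N.bFun ⇑F (e, t)) (Icc (0:ℝ) 1) := by
  obtain ⟨x, y⟩ := e
  show ContinuousOn (fun t => (N.m0 x : ℂ)⁻¹ *
    ∑' u, (N.c x u : ℂ) * ∫ s in (0:ℝ)..(1 - t), ⇑F ((x, u), s)) (Icc (0:ℝ) 1)
  refine continuousOn_const.mul ?_
  refine continuousOn_tsum (u := fun u =>
      (ENNReal.ofReal (N.c x u) * ∫⁻ s in Ioo (0:ℝ) 1, (‖⇑F ((x, u), s)‖₊ : ℝ≥0∞)).toReal)
    ?_ (ENNReal.summable_toReal (N.eS_ne_top F x)) ?_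
  · intro u
    by_cases hc : N.c x u = 0
    · simp only [hc, Complex.ofReal_zero, zero_mul]
      exact continuousOn_const
    · refine continuousOn_const.mul ?_
      have hcont := intervalIntegral.continuousOn_primitive_interval
        (N.edge_integrableOn F x u hc)
      have hmap : MapsTo (fun t : ℝ => 1 - t) (Icc (0:ℝ) 1) (uIcc (0:ℝ) 1) := by
        rw [uIcc_of_le (zero_le_one : (0:ℝ) ≤ 1)]
        intro t ht
        simp only [Set.mem_Icc] at ht ⊢
        constructor <;> [linarith [ht.2]; linarith [ht.1]]
      exact hcont.comp ((continuous_const.sub continuous_id).continuousOn) hmap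
  · intro u t ht
    have h1 := nnnorm_intervalIntegral_le (V := V) ⇑F x u ht
    have hterm := N.edge_term_ne_top F x u
    have h2 : ENNReal.ofReal (‖(N.c x u : ℂ) * ∫ s in (0:ℝ)..(1 - t), ⇑F ((x, u), s)‖)
        ≤ ENNReal.ofReal (N.c x u) * ∫⁻ s in Ioo (0:ℝ) 1, (‖⇑F ((x, u), s)‖₊ : ℝ≥0∞) := by
      rw [ofReal_norm, enorm_eq_nnnorm, nnnorm_mul, ENNReal.coe_mul, N.ofReal_c_eq x u]
      exact mul_le_mul' le_rfl h1
    calc ‖(N.c x u : ℂ) * ∫ s in (0:ℝ)..(1 - t), ⇑F ((x, u), s)‖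
        = (ENNReal.ofReal ‖(N.c x u : ℂ) * ∫ s in (0:ℝ)..(1 - t), ⇑F ((x, u), s)‖).toReal := by
          rw [ENNReal.toReal_ofReal (norm_nonneg _)]
    _ ≤ _ := ENNReal.toReal_mono hterm h2

lemma aesm_bFun (F : Lp ℂ 2 N.edgeMeasure) :
    AEStronglyMeasurable (N.bFun ⇑F) N.edgeMeasure := by
  refine aestronglyMeasurable_sum_measure_iff.mpr fun e => ?_
  rw [(measurableEmbedding_prodMk_left e).aestronglyMeasurable_map_iff]
  refine AEStronglyMeasurable.mono_ac Measure.smul_absolutelyContinuous ?_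
  exact ((N.continuousOn_bFun F e).mono Ioo_subset_Icc_self).aestronglyMeasurable
    measurableSet_Ioo

lemma lintegral_bFun_sq_le (F : Lp ℂ 2 N.edgeMeasure) :
    ∫⁻ p, (‖N.bFun ⇑F p‖₊ : ℝ≥0∞) ^ 2 ∂N.edgeMeasure
      ≤ ∫⁻ p, (‖⇑F p‖₊ : ℝ≥0∞) ^ 2 ∂N.edgeMeasure := by
  rw [N.lintegral_edgeMeasure (fun p => (‖N.bFun ⇑F p‖₊ : ℝ≥0∞) ^ 2) (((N.aesm_bFun F).enorm).pow_const 2),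
    ENNReal.tsum_prod (f := fun x y => ENNReal.ofReal (N.c x y / 2) *
      ∫⁻ t in Ioo (0:ℝ) 1, (‖N.bFun ⇑F ((x, y), t)‖₊ : ℝ≥0∞) ^ 2)]
  have hstep : ∀ x y : V,
      ENNReal.ofReal (N.c x y / 2) * ∫⁻ t in Ioo (0:ℝ) 1, (‖N.bFun ⇑F ((x, y), t)‖₊ : ℝ≥0∞) ^ 2
      ≤ ENNReal.ofReal (N.c x y / 2) *
          (((‖((N.m0 x : ℝ) : ℂ)⁻¹‖₊ : ℝ≥0∞) * N.eS ⇑F x) ^ 2) := by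
    intro x y
    refine mul_le_mul' le_rfl ?_
    have hb : ∀ t ∈ Ioo (0:ℝ) 1, (‖N.bFun ⇑F ((x, y), t)‖₊ : ℝ≥0∞) ^ 2
        ≤ ((‖((N.m0 x : ℝ) : ℂ)⁻¹‖₊ : ℝ≥0∞) * N.eS ⇑F x) ^ 2 := fun t ht =>
      pow_le_pow_left₀ zero_le (N.bFun_nnnorm_le ⇑F x y (Ioo_subset_Icc_self ht)) 2
    calc ∫⁻ t in Ioo (0:ℝ) 1, (‖N.bFun ⇑F ((x, y), t)‖₊ : ℝ≥0∞) ^ 2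
        ≤ ∫⁻ _ in Ioo (0:ℝ) 1, ((‖((N.m0 x : ℝ) : ℂ)⁻¹‖₊ : ℝ≥0∞) * N.eS ⇑F x) ^ 2 :=
          setLIntegral_mono' measurableSet_Ioo hb
    _ = ((‖((N.m0 x : ℝ) : ℂ)⁻¹‖₊ : ℝ≥0∞) * N.eS ⇑F x) ^ 2 := by
          rw [setLIntegral_const, Real.volume_Ioo]
          norm_num
  calc ∑' (x : V) (y : V), ENNReal.ofReal (N.c x y / 2) *
        ∫⁻ t in Ioo (0:ℝ) 1, (‖N.bFun ⇑F ((x, y), t)‖₊ : ℝ≥0∞) ^ 2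
      ≤ ∑' (x : V) (y : V), ENNReal.ofReal (N.c x y / 2) *
          (((‖((N.m0 x : ℝ) : ℂ)⁻¹‖₊ : ℝ≥0∞) * N.eS ⇑F x) ^ 2) :=
        ENNReal.tsum_le_tsum fun x => ENNReal.tsum_le_tsum fun y => hstep x y
  _ = ∑' (x : V), (ENNReal.ofReal (N.m0 x) * 2⁻¹) *
        (((‖((N.m0 x : ℝ) : ℂ)⁻¹‖₊ : ℝ≥0∞) * N.eS ⇑F x) ^ 2) := by
        refine tsum_congr fun x => ?_
        rw [ENNReal.tsum_mul_right]
        congr 1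
        rw [N.ofReal_m0 x]
        rw [← ENNReal.tsum_mul_right]
        refine tsum_congr fun y => ?_
        rw [ENNReal.ofReal_div_of_pos (by norm_num)]
        norm_num
        rfl
  _ ≤ ∑' (x : V), 2⁻¹ * N.eW ⇑F x := by
        refine ENNReal.tsum_le_tsum fun x => ?_
        have h1 : (((‖((N.m0 x : ℝ) : ℂ)⁻¹‖₊ : ℝ≥0∞) * N.eS ⇑F x) ^ 2)
            ≤ (‖((N.m0 x : ℝ) : ℂ)⁻¹‖₊ : ℝ≥0∞) ^ 2 * (ENNReal.ofReal (N.m0 x) * N.eW ⇑F x) := by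
          rw [mul_pow]
          exact mul_le_mul' le_rfl (N.eS_sq_le ⇑F (Lp.stronglyMeasurable F) x)
        calc ENNReal.ofReal (N.m0 x) * 2⁻¹ *
              (((‖((N.m0 x : ℝ) : ℂ)⁻¹‖₊ : ℝ≥0∞) * N.eS ⇑F x) ^ 2)
            ≤ ENNReal.ofReal (N.m0 x) * 2⁻¹ *
              ((‖((N.m0 x : ℝ) : ℂ)⁻¹‖₊ : ℝ≥0∞) ^ 2 * (ENNReal.ofReal (N.m0 x) * N.eW ⇑F x)) :=
            mul_le_mul' le_rfl h1
        _ = ((‖((N.m0 x : ℝ) : ℂ)⁻¹‖₊ : ℝ≥0∞) * ENNReal.ofReal (N.m0 x)) ^ 2 *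
              (2⁻¹ * N.eW ⇑F x) := by ring
        _ ≤ 1 ^ 2 * (2⁻¹ * N.eW ⇑F x) :=
            mul_le_mul' (pow_le_pow_left₀ zero_le (N.inv_m0_mul_le_one x) 2) le_rfl
        _ = 2⁻¹ * N.eW ⇑F x := by rw [one_pow, one_mul]
  _ = 2⁻¹ * ∑' (x : V), N.eW ⇑F x := ENNReal.tsum_mul_left
  _ = ∫⁻ p, (‖⇑F p‖₊ : ℝ≥0∞) ^ 2 ∂N.edgeMeasure := by
        rw [N.tsum_eW ⇑F (Lp.aestronglyMeasurable F), ← mul_assoc,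
          ENNReal.inv_mul_cancel (by norm_num) (by norm_num), one_mul]

lemma memL2_bFun (F : Lp ℂ 2 N.edgeMeasure) : MemLp (N.bFun ⇑F) 2 N.edgeMeasure :=
  (memL2_iff (N.aesm_bFun F)).mpr
    (lt_of_le_of_lt (N.lintegral_bFun_sq_le F) (N.lintegral_coe_sq_lt_top F))

lemma eLpNorm_bFun_le (F : Lp ℂ 2 N.edgeMeasure) :
    eLpNorm (N.bFun ⇑F) 2 N.edgeMeasure ≤ eLpNorm (⇑F) 2 N.edgeMeasure := by
  rw [eLpNorm_two_eq, eLpNorm_two_eq]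
  exact ENNReal.rpow_le_rpow (N.lintegral_bFun_sq_le F) (by norm_num)

lemma norm_bterm_le (F : Lp ℂ 2 N.edgeMeasure) (x u : V) {t : ℝ} (ht : t ∈ Icc (0:ℝ) 1) :
    ‖(N.c x u : ℂ) * ∫ s in (0:ℝ)..(1 - t), ⇑F ((x, u), s)‖
      ≤ (ENNReal.ofReal (N.c x u) *
          ∫⁻ s in Ioo (0:ℝ) 1, (‖⇑F ((x, u), s)‖₊ : ℝ≥0∞)).toReal := by
  have h1 := nnnorm_intervalIntegral_le (V := V) ⇑F x u ht
  have hterm := N.edge_term_ne_top F x u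
  have h2 : ENNReal.ofReal (‖(N.c x u : ℂ) * ∫ s in (0:ℝ)..(1 - t), ⇑F ((x, u), s)‖)
      ≤ ENNReal.ofReal (N.c x u) * ∫⁻ s in Ioo (0:ℝ) 1, (‖⇑F ((x, u), s)‖₊ : ℝ≥0∞) := by
    rw [ofReal_norm, enorm_eq_nnnorm, nnnorm_mul, ENNReal.coe_mul, N.ofReal_c_eq x u]
    exact mul_le_mul' le_rfl h1
  calc ‖(N.c x u : ℂ) * ∫ s in (0:ℝ)..(1 - t), ⇑F ((x, u), s)‖
      = (ENNReal.ofReal ‖(N.c x u : ℂ) * ∫ s in (0:ℝ)..(1 - t), ⇑F ((x, u), s)‖).toReal := by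
        rw [ENNReal.toReal_ofReal (norm_nonneg _)]
  _ ≤ _ := ENNReal.toReal_mono hterm h2

lemma summable_bterm (F : Lp ℂ 2 N.edgeMeasure) (x : V) {t : ℝ} (ht : t ∈ Icc (0:ℝ) 1) :
    Summable fun u => (N.c x u : ℂ) * ∫ s in (0:ℝ)..(1 - t), ⇑F ((x, u), s) :=
  Summable.of_norm_bounded (ENNReal.summable_toReal (N.eS_ne_top F x))
    fun u => N.norm_bterm_le F x u ht

lemma intervalIntegrable_edge (F : Lp ℂ 2 N.edgeMeasure) (x u : V) (hc : N.c x u ≠ 0)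
    {t : ℝ} (ht : t ∈ Icc (0:ℝ) 1) :
    IntervalIntegrable (fun s => ⇑F ((x, u), s)) volume 0 (1 - t) := by
  refine IntegrableOn.intervalIntegrable ((N.edge_integrableOn F x u hc).mono_set ?_)
  rw [uIcc_of_le (by linarith [ht.2] : (0:ℝ) ≤ 1 - t), uIcc_of_le (zero_le_one : (0:ℝ) ≤ 1)]
  exact Icc_subset_Icc le_rfl (by linarith [ht.1])

/-- `bFun` only depends on the a.e.-class. -/
lemma bFun_congr_ae {f g : (V × V) × ℝ → ℂ} (hf : StronglyMeasurable f)
    (hg : StronglyMeasurable g) (h : f =ᵐ[N.edgeMeasure] g) :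
    N.bFun f =ᵐ[N.edgeMeasure] N.bFun g := by
  have hD : MeasurableSet {p : (V × V) × ℝ | ¬ f p = g p} :=
    (hf.measurableSet_eq_fun hg).compl
  have h0 : N.edgeMeasure {p : (V × V) × ℝ | ¬ f p = g p} = 0 := by
    rw [Filter.EventuallyEq, ae_iff] at h
    exact h
  have hcomp : ∀ e : V × V, (Measure.map (fun t => (e, t))
      ((ENNReal.ofReal (N.c e.1 e.2 / 2)) • (volume.restrict (Ioo (0:ℝ) 1))))
        {p : (V × V) × ℝ | ¬ f p = g p} = 0 := by
    have hsum : (Measure.sum fun e : V × V => Measure.map (fun t => (e, t))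
        ((ENNReal.ofReal (N.c e.1 e.2 / 2)) • (volume.restrict (Ioo (0:ℝ) 1))))
          {p : (V × V) × ℝ | ¬ f p = g p} = 0 := h0
    rw [Measure.sum_apply _ hD] at hsum
    exact fun e => (ENNReal.tsum_eq_zero.mp hsum) e
  have hedge : ∀ x u : V, N.c x u ≠ 0 →
      (fun s => f ((x, u), s)) =ᵐ[volume.restrict (Ioo (0:ℝ) 1)] fun s => g ((x, u), s) := by
    intro x u hc
    have h1 := hcomp (x, u)
    rw [Measure.map_apply measurable_prodMk_left hD, Measure.smul_apply, smul_eq_mul] at h1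
    have hc2 : ENNReal.ofReal (N.c x u / 2) ≠ 0 := by
      simp only [ne_eq, ENNReal.ofReal_eq_zero, not_le]
      have := lt_of_le_of_ne (N.c_nonneg x u) (Ne.symm hc)
      linarith
    have h2 : volume.restrict (Ioo (0:ℝ) 1)
        ((fun t => ((x, u), t)) ⁻¹' {p : (V × V) × ℝ | ¬ f p = g p}) = 0 :=
      (mul_eq_zero.mp h1).resolve_left hc2
    rw [Filter.EventuallyEq, ae_iff]
    exact h2
  filter_upwards [N.ae_snd_mem_Ioo] with p hp
  obtain ⟨⟨x, y⟩, t⟩ := p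
  show (N.m0 x : ℂ)⁻¹ * ∑' u, (N.c x u : ℂ) * ∫ s in (0:ℝ)..(1 - t), f ((x, u), s)
    = (N.m0 x : ℂ)⁻¹ * ∑' u, (N.c x u : ℂ) * ∫ s in (0:ℝ)..(1 - t), g ((x, u), s)
  congr 1
  refine tsum_congr fun u => ?_
  by_cases hc : N.c x u = 0
  · simp [hc]
  · congr 1
    have hae : (fun s => f ((x, u), s)) =ᵐ[volume.restrict (Ioc (0:ℝ) (1 - t))]
        fun s => g ((x, u), s) := by
      refine ae_restrict_of_ae_restrict_of_subset ?_ (hedge x u hc)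
      intro s hs
      simp only [mem_Ioo, mem_Ioc] at hs ⊢
      exact ⟨hs.1, lt_of_le_of_lt hs.2 (by simp only [mem_Ioo] at hp; linarith [hp.1])⟩
    have h1 : (0:ℝ) ≤ 1 - t := by
      simp only [mem_Ioo] at hp; linarith [hp.2]
    rw [intervalIntegral.integral_of_le h1, intervalIntegral.integral_of_le h1]
    exact integral_congr_ae hae

lemma bFun_add_ae (F G : Lp ℂ 2 N.edgeMeasure) :
    N.bFun (⇑(F + G)) =ᵐ[N.edgeMeasure] N.bFun ⇑F + N.bFun ⇑G := by
  have step1 : N.bFun (⇑(F + G)) =ᵐ[N.edgeMeasure] N.bFun (⇑F + ⇑G) :=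
    N.bFun_congr_ae (Lp.stronglyMeasurable (F + G))
      ((Lp.stronglyMeasurable F).add (Lp.stronglyMeasurable G)) (Lp.coeFn_add F G)
  refine step1.trans ?_
  filter_upwards [N.ae_snd_mem_Ioo] with p hp
  obtain ⟨⟨x, y⟩, t⟩ := p
  have ht : t ∈ Icc (0:ℝ) 1 := Ioo_subset_Icc_self hp
  show (N.m0 x : ℂ)⁻¹ * ∑' u, (N.c x u : ℂ) *
      ∫ s in (0:ℝ)..(1 - t), (⇑F ((x, u), s) + ⇑G ((x, u), s))
    = (N.m0 x : ℂ)⁻¹ * (∑' u, (N.c x u : ℂ) * ∫ s in (0:ℝ)..(1 - t), ⇑F ((x, u), s))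
      + (N.m0 x : ℂ)⁻¹ * ∑' u, (N.c x u : ℂ) * ∫ s in (0:ℝ)..(1 - t), ⇑G ((x, u), s)
  have key : ∀ u : V, (N.c x u : ℂ) *
      ∫ s in (0:ℝ)..(1 - t), (⇑F ((x, u), s) + ⇑G ((x, u), s))
      = (N.c x u : ℂ) * (∫ s in (0:ℝ)..(1 - t), ⇑F ((x, u), s))
        + (N.c x u : ℂ) * ∫ s in (0:ℝ)..(1 - t), ⇑G ((x, u), s) := by
    intro u
    by_cases hc : N.c x u = 0
    · simp [hc]
    · rw [intervalIntegral.integral_add (N.intervalIntegrable_edge F x u hc ht)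
        (N.intervalIntegrable_edge G x u hc ht), mul_add]
  rw [funext key, Summable.tsum_add (N.summable_bterm F x ht) (N.summable_bterm G x ht), mul_add]

lemma bFun_smul (a : ℂ) (f : (V × V) × ℝ → ℂ) : N.bFun (a • f) = a • N.bFun f := by
  funext p
  show (N.m0 p.1.1 : ℂ)⁻¹ * ∑' u, (N.c p.1.1 u : ℂ) *
      ∫ s in (0:ℝ)..(1 - p.2), a • f ((p.1.1, u), s)
    = a * ((N.m0 p.1.1 : ℂ)⁻¹ * ∑' u, (N.c p.1.1 u : ℂ) *
      ∫ s in (0:ℝ)..(1 - p.2), f ((p.1.1, u), s))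
  simp only [smul_eq_mul, intervalIntegral.integral_const_mul]
  rw [show (fun u => (N.c p.1.1 u : ℂ) * (a * ∫ s in (0:ℝ)..(1 - p.2), f ((p.1.1, u), s)))
      = fun u => a * ((N.c p.1.1 u : ℂ) * ∫ s in (0:ℝ)..(1 - p.2), f ((p.1.1, u), s)) from
    funext fun u => by ring, tsum_mul_left]
  ring

lemma bFun_smul_ae (a : ℂ) (F : Lp ℂ 2 N.edgeMeasure) :
    N.bFun (⇑(a • F)) =ᵐ[N.edgeMeasure] a • N.bFun ⇑F := by
  have step1 : N.bFun (⇑(a • F)) =ᵐ[N.edgeMeasure] N.bFun (a • ⇑F) :=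
    N.bFun_congr_ae (Lp.stronglyMeasurable (a • F))
      ((Lp.stronglyMeasurable F).const_smul a) (Lp.coeFn_smul a F)
  rw [N.bFun_smul a ⇑F] at step1
  exact step1

/-- The one-sided averaging operator on `L²` of the edge measure. -/
def bop : Lp ℂ 2 N.edgeMeasure →L[ℂ] Lp ℂ 2 N.edgeMeasure :=
  LinearMap.mkContinuous
    { toFun := fun F => (N.memL2_bFun F).toLp _
      map_add' := fun F G => by
        refine Eq.trans (MemLp.toLp_congr _ ((N.memL2_bFun F).add (N.memL2_bFun G))
          (N.bFun_add_ae F G)) ?_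
        exact MemLp.toLp_add _ _
      map_smul' := fun a F => by
        simp only [RingHom.id_apply]
        exact Eq.trans ((N.memL2_bFun (a • F)).toLp_congr
          ((N.memL2_bFun F).const_smul a) (N.bFun_smul_ae a F))
          (MemLp.toLp_const_smul _ _) }
    1
    (fun F => by
      rw [one_mul]
      show ‖(N.memL2_bFun F).toLp _‖ ≤ ‖F‖
      rw [Lp.norm_toLp, Lp.norm_def]
      exact ENNReal.toReal_mono (Lp.eLpNorm_ne_top F) (N.eLpNorm_bFun_le F))

lemma coeFn_bop (F : Lp ℂ 2 N.edgeMeasure) :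
    ⇑(N.bop F) =ᵐ[N.edgeMeasure] N.bFun ⇑F := by
  have : N.bop F = (N.memL2_bFun F).toLp _ := rfl
  rw [this]
  exact MemLp.coeFn_toLp _

/-- The symmetric kernel of the one-sided averaging operator. -/
def kern (p q : (V × V) × ℝ) : ℝ :=
  if q.1.1 = p.1.1 ∧ p.2 + q.2 < 1 then 2 / N.m0 p.1.1 else 0

lemma kern_symm (p q : (V × V) × ℝ) : N.kern p q = N.kern q p := by
  unfold kern
  by_cases h : q.1.1 = p.1.1 ∧ p.2 + q.2 < 1
  · rw [if_pos h, if_pos ⟨h.1.symm, by linarith [h.2]⟩, h.1]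
  · rw [if_neg h, if_neg fun hh => h ⟨hh.1.symm, by linarith [hh.2]⟩]

lemma kern_nonneg (p q : (V × V) × ℝ) : 0 ≤ N.kern p q := by
  unfold kern
  split
  · exact div_nonneg (by norm_num) (N.m0_nonneg _)
  · exact le_rfl

lemma measurable_kern :
    Measurable (fun z : ((V × V) × ℝ) × ((V × V) × ℝ) => N.kern z.1 z.2) := by
  unfold kern
  refine Measurable.ite ?_ ?_ measurable_const
  · refine MeasurableSet.inter ?_ ?_
    · exact measurableSet_eq_fun measurable_snd.fst.fst measurable_fst.fst.fst
    · exact measurableSet_lt (measurable_fst.snd.add measurable_snd.snd) measurable_const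
  · exact (measurable_of_countable (fun x : V => 2 / N.m0 x)).comp measurable_fst.fst.fst

lemma measurable_kern_right (p : (V × V) × ℝ) : Measurable (N.kern p) :=
  N.measurable_kern.comp measurable_prodMk_left

lemma ofReal_kern_eq (p q : (V × V) × ℝ) :
    (‖((N.kern p q : ℝ) : ℂ)‖₊ : ℝ≥0∞) = ENNReal.ofReal (N.kern p q) := by
  rw [← enorm_eq_nnnorm, ← ofReal_norm, Complex.norm_real, Real.norm_eq_abs,
    abs_of_nonneg (N.kern_nonneg p q)]

/-- Bound for integrals against the kernel. -/
def kbound (F : Lp ℂ 2 N.edgeMeasure) (x : V) : ℝ≥0∞ :=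
  ENNReal.ofReal (2 / N.m0 x) * (N.eS ⇑F x / 2)

lemma kbound_ne_top (F : Lp ℂ 2 N.edgeMeasure) (x : V) : N.kbound F x ≠ ⊤ :=
  ENNReal.mul_ne_top ENNReal.ofReal_ne_top
    (ENNReal.div_lt_top (N.eS_ne_top F x) (by norm_num)).ne

lemma half_sum_eS (F : Lp ℂ 2 N.edgeMeasure) (x : V) :
    ∑' u, ENNReal.ofReal (N.c x u / 2) *
        ∫⁻ s in Ioo (0:ℝ) 1, (‖⇑F ((x, u), s)‖₊ : ℝ≥0∞) = N.eS ⇑F x / 2 := by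
  rw [ENNReal.div_eq_inv_mul, eS, ← ENNReal.tsum_mul_left]
  refine tsum_congr fun u => ?_
  rw [ENNReal.ofReal_div_of_pos (by norm_num), ENNReal.div_eq_inv_mul, mul_assoc]
  norm_num

lemma lintegral_kern_le (F : Lp ℂ 2 N.edgeMeasure) (p : (V × V) × ℝ) :
    ∫⁻ q, ENNReal.ofReal (N.kern p q) * (‖⇑F q‖₊ : ℝ≥0∞) ∂N.edgeMeasure
      ≤ N.kbound F p.1.1 := by
  set x := p.1.1 with hx
  have hmeas : AEMeasurable (fun q => ENNReal.ofReal (N.kern p q) * (‖⇑F q‖₊ : ℝ≥0∞))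
      N.edgeMeasure :=
    ((ENNReal.measurable_ofReal.comp (N.measurable_kern_right p)).aemeasurable.mul
      (Lp.aestronglyMeasurable F).enorm)
  rw [N.lintegral_edgeMeasure _ hmeas]
  have hpoint : ∀ (e : V × V) (t : ℝ), ENNReal.ofReal (N.kern p (e, t))
      ≤ ENNReal.ofReal (if e.1 = x then 2 / N.m0 x else 0) := by
    intro e t
    refine ENNReal.ofReal_le_ofReal ?_
    unfold kern
    split
    · next h => rw [if_pos h.1]
    · next h =>
        split
        · exact div_nonneg (by norm_num) (N.m0_nonneg _)
        · exact le_rfl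
  have hstep : ∀ e : V × V,
      ENNReal.ofReal (N.c e.1 e.2 / 2) *
        ∫⁻ t in Ioo (0:ℝ) 1, ENNReal.ofReal (N.kern p (e, t)) * (‖⇑F (e, t)‖₊ : ℝ≥0∞)
      ≤ (if e.1 = x then ENNReal.ofReal (2 / N.m0 x) *
          (ENNReal.ofReal (N.c e.1 e.2 / 2) *
            ∫⁻ t in Ioo (0:ℝ) 1, (‖⇑F (e, t)‖₊ : ℝ≥0∞)) else 0) := by
    intro e
    by_cases he : e.1 = x
    · rw [if_pos he]
      calc ENNReal.ofReal (N.c e.1 e.2 / 2) *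
            ∫⁻ t in Ioo (0:ℝ) 1, ENNReal.ofReal (N.kern p (e, t)) * (‖⇑F (e, t)‖₊ : ℝ≥0∞)
          ≤ ENNReal.ofReal (N.c e.1 e.2 / 2) *
            ∫⁻ t in Ioo (0:ℝ) 1, ENNReal.ofReal (2 / N.m0 x) * (‖⇑F (e, t)‖₊ : ℝ≥0∞) := by
            refine mul_le_mul' le_rfl (lintegral_mono fun t => ?_)
            refine mul_le_mul' ((hpoint e t).trans ?_) le_rfl
            rw [if_pos he]
      _ = ENNReal.ofReal (2 / N.m0 x) * (ENNReal.ofReal (N.c e.1 e.2 / 2) *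
            ∫⁻ t in Ioo (0:ℝ) 1, (‖⇑F (e, t)‖₊ : ℝ≥0∞)) := by
            rw [lintegral_const_mul' _ _ ENNReal.ofReal_ne_top]
            ring
    · rw [if_neg he]
      have : ∀ t : ℝ, ENNReal.ofReal (N.kern p (e, t)) = 0 := by
        intro t
        refine le_antisymm ((hpoint e t).trans ?_) zero_le
        rw [if_neg he]
        simp
      simp only [this, zero_mul, lintegral_zero, mul_zero]
      exact le_rfl
  calc ∑' e : V × V, ENNReal.ofReal (N.c e.1 e.2 / 2) *
        ∫⁻ t in Ioo (0:ℝ) 1, ENNReal.ofReal (N.kern p (e, t)) * (‖⇑F (e, t)‖₊ : ℝ≥0∞)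
      ≤ ∑' e : V × V, (if e.1 = x then ENNReal.ofReal (2 / N.m0 x) *
          (ENNReal.ofReal (N.c e.1 e.2 / 2) *
            ∫⁻ t in Ioo (0:ℝ) 1, (‖⇑F (e, t)‖₊ : ℝ≥0∞)) else 0) :=
        ENNReal.tsum_le_tsum hstep
  _ = ∑' (x' : V) (u : V), (if x' = x then ENNReal.ofReal (2 / N.m0 x) *
          (ENNReal.ofReal (N.c x' u / 2) *
            ∫⁻ t in Ioo (0:ℝ) 1, (‖⇑F ((x', u), t)‖₊ : ℝ≥0∞)) else 0) :=
        ENNReal.tsum_prod (f := fun x' u => if x' = x then ENNReal.ofReal (2 / N.m0 x) *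
          (ENNReal.ofReal (N.c x' u / 2) *
            ∫⁻ t in Ioo (0:ℝ) 1, (‖⇑F ((x', u), t)‖₊ : ℝ≥0∞)) else 0)
  _ = ∑' u : V, ENNReal.ofReal (2 / N.m0 x) * (ENNReal.ofReal (N.c x u / 2) *
            ∫⁻ t in Ioo (0:ℝ) 1, (‖⇑F ((x, u), t)‖₊ : ℝ≥0∞)) := by
        rw [tsum_eq_single x fun x' hx' => by simp [hx']]
        simp
  _ = N.kbound F x := by
        rw [ENNReal.tsum_mul_left, kbound, N.half_sum_eS F x]

lemma integrable_kern_mul (F : Lp ℂ 2 N.edgeMeasure) (p : (V × V) × ℝ) :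
    Integrable (fun q => (N.kern p q : ℂ) * ⇑F q) N.edgeMeasure := by
  constructor
  · exact ((Complex.measurable_ofReal.comp (N.measurable_kern_right p)).mul
      (Lp.stronglyMeasurable F).measurable).aestronglyMeasurable
  · rw [HasFiniteIntegral]
    have heq : ∀ q, (‖(N.kern p q : ℂ) * ⇑F q‖₊ : ℝ≥0∞)
        = ENNReal.ofReal (N.kern p q) * (‖⇑F q‖₊ : ℝ≥0∞) := by
      intro q
      rw [nnnorm_mul, ENNReal.coe_mul, N.ofReal_kern_eq]
    simp only [enorm_eq_nnnorm, heq]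
    exact lt_of_le_of_lt (N.lintegral_kern_le F p)
      (lt_top_iff_ne_top.mpr (N.kbound_ne_top F p.1.1))

lemma bFun_eq_integral (F : Lp ℂ 2 N.edgeMeasure) :
    ∀ᵐ p ∂N.edgeMeasure,
      N.bFun ⇑F p = ∫ q, (N.kern p q : ℂ) * ⇑F q ∂N.edgeMeasure := by
  filter_upwards [N.ae_snd_mem_Ioo] with p hp
  obtain ⟨⟨x, y⟩, t⟩ := p
  simp only [mem_Ioo] at hp
  have h1 : ∫ q, (N.kern ((x, y), t) q : ℂ) * ⇑F q ∂N.edgeMeasure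
      = ∑' e : V × V, ∫ q, (N.kern ((x, y), t) q : ℂ) * ⇑F q
          ∂(Measure.map (fun s : ℝ => (e, s))
            ((ENNReal.ofReal (N.c e.1 e.2 / 2)) • (volume.restrict (Ioo (0:ℝ) 1)))) :=
    integral_sum_measure (N.integrable_kern_mul F ((x, y), t))
  have h2 : ∀ e : V × V, ∫ q, (N.kern ((x, y), t) q : ℂ) * ⇑F q
          ∂(Measure.map (fun s : ℝ => (e, s))
            ((ENNReal.ofReal (N.c e.1 e.2 / 2)) • (volume.restrict (Ioo (0:ℝ) 1))))
      = (N.c e.1 e.2 / 2) • ∫ s in Ioo (0:ℝ) 1, (N.kern ((x, y), t) (e, s) : ℂ) * ⇑F (e, s) := by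
    intro e
    rw [integral_map measurable_prodMk_left.aemeasurable
      ((N.integrable_kern_mul F ((x, y), t)).aestronglyMeasurable.mono_measure
        (Measure.le_sum _ e)),
      integral_smul_measure, ENNReal.toReal_ofReal (div_nonneg (N.c_nonneg _ _) (by norm_num))]
  rw [h1]
  simp only [h2]
  rw [← Function.Injective.tsum_eq (f := fun e : V × V =>
      (N.c e.1 e.2 / 2) • ∫ s in Ioo (0:ℝ) 1, (N.kern ((x, y), t) (e, s) : ℂ) * ⇑F (e, s))
      (g := fun u : V => (x, u)) (fun a b h => (Prod.mk.injEq _ _ _ _).mp h |>.2) ?_]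
  swap
  · intro e he
    simp only [Function.mem_support, ne_eq] at he
    by_contra hrange
    have hex : e.1 ≠ x := by
      intro hh
      exact hrange ⟨e.2, by rw [← hh]⟩
    refine he ?_
    have : ∀ s : ℝ, (N.kern ((x, y), t) (e, s) : ℂ) * ⇑F (e, s) = 0 := by
      intro s
      have : N.kern ((x, y), t) (e, s) = 0 := by
        unfold kern
        rw [if_neg]
        rintro ⟨h1', -⟩
        exact hex h1'
      rw [this]
      simp
    simp only [this, integral_zero, smul_zero]
  -- now a sum over u of the star integrals
  show N.bFun ⇑F ((x, y), t) = ∑' u : V,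
    (N.c x u / 2) • ∫ s in Ioo (0:ℝ) 1, (N.kern ((x, y), t) ((x, u), s) : ℂ) * ⇑F ((x, u), s)
  have h3 : ∀ u : V, ∫ s in Ioo (0:ℝ) 1, (N.kern ((x, y), t) ((x, u), s) : ℂ) * ⇑F ((x, u), s)
      = ((2 / N.m0 x : ℝ) : ℂ) * ∫ s in (0:ℝ)..(1 - t), ⇑F ((x, u), s) := by
    intro u
    have hind : ∀ s : ℝ, (N.kern ((x, y), t) ((x, u), s) : ℂ) * ⇑F ((x, u), s)
        = Set.indicator (Iio (1 - t)) (fun s => ((2 / N.m0 x : ℝ) : ℂ) * ⇑F ((x, u), s)) s := by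
      intro s
      by_cases hs : t + s < 1
      · rw [Set.indicator_of_mem (by simp only [mem_Iio]; linarith)]
        unfold kern
        rw [if_pos ⟨rfl, hs⟩]
      · rw [Set.indicator_of_notMem (by simp only [mem_Iio]; intro hh; exact hs (by linarith))]
        have : N.kern ((x, y), t) ((x, u), s) = 0 := by
          unfold kern
          rw [if_neg]
          rintro ⟨-, h2'⟩
          exact hs h2'
        rw [this]
        simp
    rw [show (fun s => (N.kern ((x, y), t) ((x, u), s) : ℂ) * ⇑F ((x, u), s))
        = fun s => Set.indicator (Iio (1 - t)) (fun s => ((2 / N.m0 x : ℝ) : ℂ) * ⇑F ((x, u), s)) s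
        from funext hind]
    rw [integral_indicator measurableSet_Iio, Measure.restrict_restrict measurableSet_Iio]
    have hset : Iio (1 - t) ∩ Ioo (0:ℝ) 1 = Ioo (0:ℝ) (1 - t) := by
      ext s
      simp only [mem_inter_iff, mem_Iio, mem_Ioo]
      constructor
      · rintro ⟨h1', h2', h3'⟩
        exact ⟨h2', h1'⟩
      · rintro ⟨h1', h2'⟩
        exact ⟨h2', h1', by linarith [hp.1]⟩
    rw [hset, integral_const_mul, ← integral_Ioc_eq_integral_Ioo,
      ← intervalIntegral.integral_of_le (by linarith [hp.2] : (0:ℝ) ≤ 1 - t)]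
  simp only [h3]
  have h4 : ∀ u : V, (N.c x u / 2) • (((2 / N.m0 x : ℝ) : ℂ) * ∫ s in (0:ℝ)..(1 - t), ⇑F ((x, u), s))
      = (N.m0 x : ℂ)⁻¹ * ((N.c x u : ℂ) * ∫ s in (0:ℝ)..(1 - t), ⇑F ((x, u), s)) := by
    intro u
    rw [Complex.real_smul, ← mul_assoc, ← mul_assoc]
    congr 1
    rw [show ((N.c x u / 2 : ℝ) : ℂ) * ((2 / N.m0 x : ℝ) : ℂ) = (((N.c x u / 2) * (2 / N.m0 x) : ℝ) : ℂ)
      from (Complex.ofReal_mul _ _).symm]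
    by_cases hm : N.m0 x = 0
    · simp [hm]
    · rw [show (N.c x u / 2) * (2 / N.m0 x) = (N.m0 x)⁻¹ * N.c x u from by field_simp]
      push_cast
      ring
  simp only [h4]
  rw [tsum_mul_left]
  rfl

lemma eS_le_sqrt (F : Lp ℂ 2 N.edgeMeasure) (x : V) :
    N.eS ⇑F x ≤ (ENNReal.ofReal (N.m0 x)) ^ (1/2:ℝ) * (N.eW ⇑F x) ^ (1/2:ℝ) := by
  calc N.eS ⇑F x = ((N.eS ⇑F x) ^ 2) ^ (1/2:ℝ) := by
        rw [ennreal_sq_eq_rpow, ← ENNReal.rpow_mul]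
        norm_num
  _ ≤ (ENNReal.ofReal (N.m0 x) * N.eW ⇑F x) ^ (1/2:ℝ) :=
        ENNReal.rpow_le_rpow (N.eS_sq_le ⇑F (Lp.stronglyMeasurable F) x) (by norm_num)
  _ = (ENNReal.ofReal (N.m0 x)) ^ (1/2:ℝ) * (N.eW ⇑F x) ^ (1/2:ℝ) :=
        ENNReal.mul_rpow_of_nonneg _ _ (by norm_num)

lemma kfac_le (x : V) :
    ENNReal.ofReal (2 / N.m0 x) * ENNReal.ofReal (N.m0 x) ≤ 2 := by
  by_cases hm : N.m0 x = 0
  · simp [hm]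
  · have hpos : 0 < N.m0 x := lt_of_le_of_ne (N.m0_nonneg x) (Ne.symm hm)
    rw [← ENNReal.ofReal_mul (div_nonneg (by norm_num) hpos.le), div_mul_cancel₀ _ hm]
    simp

lemma kprod_le (F G : Lp ℂ 2 N.edgeMeasure) (x : V) :
    N.kbound F x * (N.eS ⇑G x / 2) ≤ N.eW ⇑F x + N.eW ⇑G x := by
  have h1 := N.eS_le_sqrt F x
  have h2 := N.eS_le_sqrt G x
  calc N.kbound F x * (N.eS ⇑G x / 2)
      = ENNReal.ofReal (2 / N.m0 x) * (N.eS ⇑F x * 2⁻¹) * (N.eS ⇑G x * 2⁻¹) := by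
        rw [kbound, ENNReal.div_eq_inv_mul, ENNReal.div_eq_inv_mul]
        ring
  _ ≤ ENNReal.ofReal (2 / N.m0 x) *
        (((ENNReal.ofReal (N.m0 x)) ^ (1/2:ℝ) * (N.eW ⇑F x) ^ (1/2:ℝ)) * 2⁻¹) *
        (((ENNReal.ofReal (N.m0 x)) ^ (1/2:ℝ) * (N.eW ⇑G x) ^ (1/2:ℝ)) * 2⁻¹) := by
        gcongr
  _ = (ENNReal.ofReal (2 / N.m0 x) * ((ENNReal.ofReal (N.m0 x)) ^ (1/2:ℝ) *
          (ENNReal.ofReal (N.m0 x)) ^ (1/2:ℝ))) * (2⁻¹ * 2⁻¹) *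
        ((N.eW ⇑F x) ^ (1/2:ℝ) * (N.eW ⇑G x) ^ (1/2:ℝ)) := by ring
  _ = (ENNReal.ofReal (2 / N.m0 x) * ENNReal.ofReal (N.m0 x)) * (2⁻¹ * 2⁻¹) *
        ((N.eW ⇑F x) ^ (1/2:ℝ) * (N.eW ⇑G x) ^ (1/2:ℝ)) := by
        rw [ennreal_rpow_half_mul_self]
  _ ≤ 2 * (2⁻¹ * 2⁻¹) * ((N.eW ⇑F x) ^ (1/2:ℝ) * (N.eW ⇑G x) ^ (1/2:ℝ)) := by
        gcongr
        exact N.kfac_le x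
  _ ≤ 1 * ((N.eW ⇑F x) ^ (1/2:ℝ) * (N.eW ⇑G x) ^ (1/2:ℝ)) := by
        gcongr
        rw [← mul_assoc, ENNReal.mul_inv_cancel (by norm_num) (by norm_num)]
        simp
  _ ≤ N.eW ⇑F x + N.eW ⇑G x := by
        rw [one_mul]
        exact ennreal_sqrt_mul_le_add _ _

instance (N : Network V) : SFinite N.edgeMeasure := by
  haveI : ∀ e : V × V, IsFiniteMeasure (Measure.map (fun t : ℝ => (e, t))
      ((ENNReal.ofReal (N.c e.1 e.2 / 2)) • (volume.restrict (Ioo (0:ℝ) 1)))) := by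
    intro e
    constructor
    rw [Measure.map_apply measurable_prodMk_left MeasurableSet.univ, Set.preimage_univ,
      Measure.smul_apply, smul_eq_mul]
    refine ENNReal.mul_lt_top ENNReal.ofReal_lt_top ?_
    rw [Measure.restrict_apply MeasurableSet.univ, univ_inter, Real.volume_Ioo]
    norm_num
  exact inferInstanceAs (SFinite (Measure.sum fun e : V × V =>
    Measure.map (fun t : ℝ => (e, t))
      ((ENNReal.ofReal (N.c e.1 e.2 / 2)) • (volume.restrict (Ioo (0:ℝ) 1)))))

lemma integrable_uncurry (F G : Lp ℂ 2 N.edgeMeasure) :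
    Integrable (Function.uncurry fun p q => (N.kern p q : ℂ) * (starRingEnd ℂ) (⇑F q) * ⇑G p)
      (N.edgeMeasure.prod N.edgeMeasure) := by
  have hmeas : Measurable (fun z : ((V × V) × ℝ) × ((V × V) × ℝ) =>
      (N.kern z.1 z.2 : ℂ) * (starRingEnd ℂ) (⇑F z.2) * ⇑G z.1) := by
    refine Measurable.mul (Measurable.mul ?_ ?_) ?_
    · exact Complex.measurable_ofReal.comp N.measurable_kern
    · exact Complex.continuous_conj.measurable.comp
        ((Lp.stronglyMeasurable F).measurable.comp measurable_snd)
    · exact (Lp.stronglyMeasurable G).measurable.comp measurable_fst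
  constructor
  · exact hmeas.aestronglyMeasurable
  · rw [HasFiniteIntegral]
    have heq : ∀ z : ((V × V) × ℝ) × ((V × V) × ℝ),
        (‖(N.kern z.1 z.2 : ℂ) * (starRingEnd ℂ) (⇑F z.2) * ⇑G z.1‖₊ : ℝ≥0∞)
        = ENNReal.ofReal (N.kern z.1 z.2) * (‖⇑F z.2‖₊ : ℝ≥0∞) * (‖⇑G z.1‖₊ : ℝ≥0∞) := by
      intro z
      rw [nnnorm_mul, nnnorm_mul, ENNReal.coe_mul, ENNReal.coe_mul, N.ofReal_kern_eq,
        RCLike.nnnorm_conj]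
    calc ∫⁻ z, (‖Function.uncurry (fun p q => (N.kern p q : ℂ) * (starRingEnd ℂ) (⇑F q) * ⇑G p) z‖₊ : ℝ≥0∞)
          ∂(N.edgeMeasure.prod N.edgeMeasure)
        = ∫⁻ p, ∫⁻ q, ENNReal.ofReal (N.kern p q) * (‖⇑F q‖₊ : ℝ≥0∞) * (‖⇑G p‖₊ : ℝ≥0∞)
            ∂N.edgeMeasure ∂N.edgeMeasure := by
          rw [lintegral_prod _ (by
            refine Measurable.aemeasurable ?_
            simp only [Function.uncurry]
            exact hmeas.enorm)]
          refine lintegral_congr fun p => lintegral_congr fun q => ?_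
          rw [Function.uncurry]
          exact heq (p, q)
    _ ≤ ∫⁻ p, N.kbound F p.1.1 * (‖⇑G p‖₊ : ℝ≥0∞) ∂N.edgeMeasure := by
          refine lintegral_mono fun p => ?_
          rw [show (fun q => ENNReal.ofReal (N.kern p q) * (‖⇑F q‖₊ : ℝ≥0∞) * (‖⇑G p‖₊ : ℝ≥0∞))
              = fun q => (ENNReal.ofReal (N.kern p q) * (‖⇑F q‖₊ : ℝ≥0∞)) * (‖⇑G p‖₊ : ℝ≥0∞)
              from rfl,
            lintegral_mul_const' _ _ ENNReal.coe_ne_top]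
          exact mul_le_mul' (N.lintegral_kern_le F p) le_rfl
    _ = ∑' (x : V) (y : V), ENNReal.ofReal (N.c x y / 2) *
          (N.kbound F x * ∫⁻ t in Ioo (0:ℝ) 1, (‖⇑G ((x, y), t)‖₊ : ℝ≥0∞)) := by
          have hφ : AEMeasurable (fun p : (V × V) × ℝ =>
              N.kbound F p.1.1 * (‖⇑G p‖₊ : ℝ≥0∞)) N.edgeMeasure :=
            (((measurable_of_countable (fun x : V => N.kbound F x)).comp
              measurable_fst.fst).aemeasurable).mul (Lp.aestronglyMeasurable G).enorm
          rw [N.lintegral_edgeMeasure _ hφ,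
            ENNReal.tsum_prod (f := fun x y => ENNReal.ofReal (N.c x y / 2) *
              ∫⁻ t in Ioo (0:ℝ) 1, N.kbound F x * (‖⇑G ((x, y), t)‖₊ : ℝ≥0∞))]
          refine tsum_congr fun x => tsum_congr fun y => ?_
          rw [lintegral_const_mul' _ _ (N.kbound_ne_top F x)]
    _ = ∑' x : V, N.kbound F x * (N.eS ⇑G x / 2) := by
          refine tsum_congr fun x => ?_
          rw [← N.half_sum_eS G x, ← ENNReal.tsum_mul_left]
          refine tsum_congr fun y => ?_
          ring
    _ ≤ ∑' x : V, (N.eW ⇑F x + N.eW ⇑G x) := ENNReal.tsum_le_tsum fun x => N.kprod_le F G x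
    _ < ⊤ := by
          rw [ENNReal.tsum_add, N.tsum_eW ⇑F (Lp.aestronglyMeasurable F),
            N.tsum_eW ⇑G (Lp.aestronglyMeasurable G)]
          exact ENNReal.add_lt_top.mpr
            ⟨ENNReal.mul_lt_top (by norm_num) (N.lintegral_coe_sq_lt_top F),
             ENNReal.mul_lt_top (by norm_num) (N.lintegral_coe_sq_lt_top G)⟩

lemma bop_symm (F G : Lp ℂ 2 N.edgeMeasure) :
    (inner ℂ (N.bop F) G : ℂ) = inner ℂ F (N.bop G) := by
  rw [L2.inner_def, L2.inner_def]
  have hswap := integral_integral_swap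
    (f := fun p q => (N.kern p q : ℂ) * (starRingEnd ℂ) (⇑F q) * ⇑G p)
    (N.integrable_uncurry F G)
  have hL : ∫ p, (inner ℂ (⇑(N.bop F) p) (⇑G p) : ℂ) ∂N.edgeMeasure
      = ∫ p, ∫ q, (N.kern p q : ℂ) * (starRingEnd ℂ) (⇑F q) * ⇑G p
          ∂N.edgeMeasure ∂N.edgeMeasure := by
    refine integral_congr_ae ?_
    filter_upwards [N.coeFn_bop F, N.bFun_eq_integral F] with p h1 h2
    rw [RCLike.inner_apply, h1, h2, ← integral_conj, ← integral_const_mul]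
    refine integral_congr_ae (Filter.Eventually.of_forall fun q => ?_)
    simp only [map_mul, Complex.conj_ofReal]
    ring
  have hR : ∫ q, (inner ℂ (⇑F q) (⇑(N.bop G) q) : ℂ) ∂N.edgeMeasure
      = ∫ q, ∫ p, (N.kern p q : ℂ) * (starRingEnd ℂ) (⇑F q) * ⇑G p
          ∂N.edgeMeasure ∂N.edgeMeasure := by
    refine integral_congr_ae ?_
    filter_upwards [N.coeFn_bop G, N.bFun_eq_integral G] with q h1 h2
    rw [RCLike.inner_apply, h1, h2,
      show (fun p => (N.kern p q : ℂ) * (starRingEnd ℂ) (⇑F q) * ⇑G p)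
        = fun p => (starRingEnd ℂ) (⇑F q) * ((N.kern q p : ℂ) * ⇑G p) from
        funext fun p => by rw [N.kern_symm p q]; ring,
      integral_const_mul]
    exact mul_comm _ _
  rw [hL, hR]
  exact hswap

lemma coeFn_flipOp (F : Lp ℂ 2 N.edgeMeasure) :
    ⇑(N.flipOp F) =ᵐ[N.edgeMeasure] ⇑F ∘ (eFlip (V := V)) := by
  have h : N.flipOp F = (Lp.compMeasurePreserving (eFlip (V := V))
      N.measurePreserving_eFlip) F := rfl
  rw [h]
  exact Lp.coeFn_compMeasurePreserving F N.measurePreserving_eFlip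

lemma eFlip_eFlip (p : (V × V) × ℝ) : eFlip (V := V) (eFlip p) = p := by
  simp [eFlip]

lemma flip_flip (F : Lp ℂ 2 N.edgeMeasure) : N.flipOp (N.flipOp F) = F := by
  refine Lp.ext ?_
  have h1 := N.coeFn_flipOp (N.flipOp F)
  have h2 : ⇑(N.flipOp F) ∘ (eFlip (V := V)) =ᵐ[N.edgeMeasure]
      (⇑F ∘ (eFlip (V := V))) ∘ (eFlip (V := V)) :=
    (N.measurePreserving_eFlip).quasiMeasurePreserving.ae_eq_comp (N.coeFn_flipOp F)
  refine (h1.trans (h2.trans ?_))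
  refine Filter.EventuallyEq.of_eq (funext fun p => ?_)
  simp only [Function.comp_apply, eFlip_eFlip p]

lemma flipOp_inner (F G : Lp ℂ 2 N.edgeMeasure) :
    (inner ℂ (N.flipOp F) (N.flipOp G) : ℂ) = inner ℂ F G :=
  LinearIsometry.inner_map_map (Lp.compMeasurePreservingₗᵢ (E := ℂ) (p := 2) ℂ
    (eFlip (V := V)) N.measurePreserving_eFlip) F G

lemma flip_adjoint (F G : Lp ℂ 2 N.edgeMeasure) :
    (inner ℂ (N.flipOp F) G : ℂ) = inner ℂ F (N.flipOp G) := by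
  conv_lhs => rw [← N.flip_flip G]
  exact N.flipOp_inner F (N.flipOp G)

lemma flipOp_eq_of_mem {F : Lp ℂ 2 N.edgeMeasure} (hF : F ∈ N.L2X) : N.flipOp F = F := by
  have h : (N.flipOp - ContinuousLinearMap.id ℂ (Lp ℂ 2 N.edgeMeasure)) F = 0 := hF
  rw [ContinuousLinearMap.sub_apply, ContinuousLinearMap.id_apply] at h
  exact sub_eq_zero.mp h

lemma mem_of_flipOp_eq {F : Lp ℂ 2 N.edgeMeasure} (h : N.flipOp F = F) : F ∈ N.L2X := by
  show (N.flipOp - ContinuousLinearMap.id ℂ (Lp ℂ 2 N.edgeMeasure)) F = 0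
  rw [ContinuousLinearMap.sub_apply, ContinuousLinearMap.id_apply, h, sub_self]

/-- The two-sided averaging operator `B + σBσ` on `L²` of the edge measure. -/
def cop : Lp ℂ 2 N.edgeMeasure →L[ℂ] Lp ℂ 2 N.edgeMeasure :=
  N.bop + N.flipOp.comp (N.bop.comp N.flipOp)

lemma cop_apply (F : Lp ℂ 2 N.edgeMeasure) :
    N.cop F = N.bop F + N.flipOp (N.bop (N.flipOp F)) := rfl

lemma cop_symm (F G : Lp ℂ 2 N.edgeMeasure) :
    (inner ℂ (N.cop F) G : ℂ) = inner ℂ F (N.cop G) := by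
  rw [cop_apply, cop_apply, inner_add_left, inner_add_right]
  congr 1
  · exact N.bop_symm F G
  · calc (inner ℂ (N.flipOp (N.bop (N.flipOp F))) G : ℂ)
        = inner ℂ (N.bop (N.flipOp F)) (N.flipOp G) := N.flip_adjoint _ G
    _ = inner ℂ (N.flipOp F) (N.bop (N.flipOp G)) := N.bop_symm _ _
    _ = inner ℂ F (N.flipOp (N.bop (N.flipOp G))) := N.flip_adjoint F _

lemma cop_mem {F : Lp ℂ 2 N.edgeMeasure} (hF : F ∈ N.L2X) : N.cop F ∈ N.L2X := by
  refine N.mem_of_flipOp_eq ?_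
  have hσ : N.flipOp F = F := N.flipOp_eq_of_mem hF
  rw [cop_apply, map_add, N.flip_flip, hσ]
  exact add_comm _ _

/-- The averaging operator `A` on `L²(X¹, m¹)`. -/
def aop : N.L2X →L[ℂ] N.L2X :=
  (N.cop.comp N.L2X.subtypeL).codRestrict N.L2X fun x => N.cop_mem x.2

lemma coe_aop_apply (z : N.L2X) :
    ((N.aop z : N.L2X) : Lp ℂ 2 N.edgeMeasure) = N.cop (z : Lp ℂ 2 N.edgeMeasure) := by
  rfl

lemma isSelfAdjoint_aop : IsSelfAdjoint N.aop := by
  rw [ContinuousLinearMap.isSelfAdjoint_iff_isSymmetric]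
  intro x y
  show (inner ℂ (N.aop x) y : ℂ) = inner ℂ x (N.aop y)
  rw [Submodule.coe_inner, Submodule.coe_inner, N.coe_aop_apply x, N.coe_aop_apply y]
  exact N.cop_symm _ _

set_option maxHeartbeats 2000000 in
lemma coeFn_aop (F : N.L2X) :
    ⇑((N.aop F : N.L2X) : Lp ℂ 2 N.edgeMeasure) =ᵐ[N.edgeMeasure]
      fun p => N.bFun (⇑(F : Lp ℂ 2 N.edgeMeasure)) p
        + N.bFun (⇑(F : Lp ℂ 2 N.edgeMeasure)) (eFlip p) := by
  rw [N.coe_aop_apply F, cop_apply, N.flipOp_eq_of_mem F.2]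
  refine (Lp.coeFn_add _ _).trans ?_
  have h1 := N.coeFn_bop (F : Lp ℂ 2 N.edgeMeasure)
  have h2 : ⇑(N.flipOp (N.bop (F : Lp ℂ 2 N.edgeMeasure))) =ᵐ[N.edgeMeasure]
      (fun p => N.bFun (⇑(F : Lp ℂ 2 N.edgeMeasure)) (eFlip p)) := by
    refine (N.coeFn_flipOp (N.bop (F : Lp ℂ 2 N.edgeMeasure))).trans ?_
    exact (N.measurePreserving_eFlip).quasiMeasurePreserving.ae_eq_comp h1
  filter_upwards [h1, h2] with p hp1 hp2
  show ⇑(N.bop (F : Lp ℂ 2 N.edgeMeasure)) p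
      + ⇑(N.flipOp (N.bop (F : Lp ℂ 2 N.edgeMeasure))) p = _
  rw [hp1, hp2]

end Network

end AvgOperator






/-- The averaging operator
`(AF)(xy,t) = (1/m⁰(x)) ∑_{u∼x} c(xu) ∫₀^{1-t} F(xu,s) ds
            + (1/m⁰(y)) ∑_{v∼y} c(yv) ∫₀^{t} F(yv,s) ds`
is a bounded self-adjoint operator on the Hilbert space `L²(X¹,m¹)`. -/
theorem averaging_operator_bounded_selfAdjoint
    {V : Type} [Countable V] [MeasurableSpace V] [DiscreteMeasurableSpace V]
    (N : Network V) :
    ∃ A : N.L2X →L[ℂ] N.L2X, IsSelfAdjoint A ∧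
      ∀ F : N.L2X,
        ⇑(A F : Lp ℂ 2 N.edgeMeasure) =ᵐ[N.edgeMeasure]
          fun p => N.avgFun (N.edgeFun (F : Lp ℂ 2 N.edgeMeasure)) p.1.1 p.1.2 p.2 := by
  refine ⟨N.aop, N.isSelfAdjoint_aop, fun F => ?_⟩
  refine (N.coeFn_aop F).trans ?_
  refine Filter.EventuallyEq.of_eq (funext fun p => ?_)
  obtain ⟨⟨x, y⟩, t⟩ := p
  show N.bFun (⇑(F : Lp ℂ 2 N.edgeMeasure)) ((x, y), t)
      + N.bFun (⇑(F : Lp ℂ 2 N.edgeMeasure)) ((y, x), 1 - t)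
    = N.avgFun (N.edgeFun (F : Lp ℂ 2 N.edgeMeasure)) x y t
  show ((N.m0 x : ℂ)⁻¹ * ∑' u, (N.c x u : ℂ) *
        ∫ s in (0:ℝ)..(1 - t), (F : Lp ℂ 2 N.edgeMeasure) ((x, u), s))
      + ((N.m0 y : ℂ)⁻¹ * ∑' v, (N.c y v : ℂ) *
        ∫ s in (0:ℝ)..(1 - (1 - t)), (F : Lp ℂ 2 N.edgeMeasure) ((y, v), s))
    = (N.m0 x : ℂ)⁻¹ * (∑' u, (N.c x u : ℂ) *
        ∫ s in (0:ℝ)..(1 - t), (F : Lp ℂ 2 N.edgeMeasure) ((x, u), s))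
      + (N.m0 y : ℂ)⁻¹ * (∑' v, (N.c y v : ℂ) *
        ∫ s in (0:ℝ)..t, (F : Lp ℂ 2 N.edgeMeasure) ((y, v), s))
  rw [show 1 - (1 - t) = t from by ring]
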